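/- Let C be a category with pullbacks, let D be a preorder (a category in which every hom-set has at most one element, i.e. Quiver.IsThin), and let F : C ⥤ D be a functor with a right adjoint G : D ⥤ C whose counit is a natural isomorphism, with unit η. Then for every morphism f : A ⟶ B of C, F sends the canonical morphism from A to the pullback of G.map (F.map f) : G(F A) ⟶ G(F B) along η_B : B ⟶ G(F B) (induced by f and η_A) to an isomorphism. Consequently, when C has all finite limits and colimits, the triple with weak equivalences W = {f | F.map f is an isomorphism}, cofibrations all morphisms, and fibrations W.rlp is a model structure on C. -/

import Mathlib

open CategoryTheory CategoryTheory.Limits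

universe v₁ v₂ u₁ u₂

section Preliminaries

variable {C : Type u₁} [Category.{v₁} C]

/-- The right lifting class of a class of morphisms. -/
def MorphismPropertyRLP (S : MorphismProperty C) : MorphismProperty C :=
  fun _ _ g => ∀ ⦃A B : C⦄ (f : A ⟶ B), S f → HasLiftingProperty f g

/-- The left lifting class of a class of morphisms. -/
def MorphismPropertyLLP (S : MorphismProperty C) : MorphismProperty C :=
  fun _ _ f => ∀ ⦃X Y : C⦄ (g : X ⟶ Y), S g → HasLiftingProperty f g

/-- `(L, R)` is a weak factorization system. -/
structure IsWFS (L R : MorphismProperty C) : Prop where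
  llp_eq : L = MorphismPropertyLLP R
  rlp_eq : R = MorphismPropertyRLP L
  factor : ∀ ⦃X Y : C⦄ (f : X ⟶ Y),
    ∃ (Z : C) (l : X ⟶ Z) (r : Z ⟶ Y), L l ∧ R r ∧ l ≫ r = f

/-- The two-out-of-three property for a class of morphisms. -/
def TwoOfThree (W : MorphismProperty C) : Prop :=
  ∀ ⦃X Y Z : C⦄ (f : X ⟶ Y) (g : Y ⟶ Z),
    (W f → W g → W (f ≫ g)) ∧ (W f → W (f ≫ g) → W g) ∧ (W g → W (f ≫ g) → W f)

/-- `(W, Cof, Fib)` is a model structure. -/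
structure IsModelStructure (W Cof Fib : MorphismProperty C) : Prop where
  twoOfThree : TwoOfThree W
  wfs₁ : IsWFS Cof (fun _ _ f => Fib f ∧ W f)
  wfs₂ : IsWFS (fun _ _ f => Cof f ∧ W f) Fib

end Preliminaries

section Aux

variable {C : Type u₁} [Category.{v₁} C] {D : Type u₂} [Category.{v₂} D]
  [Quiver.IsThin D] {F : C ⥤ D} {G : D ⥤ C}

/-- Morphisms into objects in the image of `G` form a subsingleton. -/
lemma aux_sub (adj : F ⊣ G) (Y : C) (Z : D) : Subsingleton (Y ⟶ G.obj Z) :=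
  Equiv.subsingleton (adj.homEquiv Y Z).symm

/-- Since `D` is thin, any morphism `B ⟶ G (F A)` witnesses that `F.map f` is iso. -/
lemma aux_w_of_hom (adj : F ⊣ G) {A B : C} (f : A ⟶ B) (k : B ⟶ G.obj (F.obj A)) :
    IsIso (F.map f) :=
  ⟨(adj.homEquiv B (F.obj A)).symm k, Subsingleton.elim _ _, Subsingleton.elim _ _⟩

variable [HasPullbacks C]

/-- The canonical morphism to the pullback is inverted by `F`. -/
lemma aux_part1 (adj : F ⊣ G) {A B : C} (f : A ⟶ B) :
    IsIso (F.map (pullback.lift f (adj.unit.app A)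
      (by simp : f ≫ adj.unit.app B = adj.unit.app A ≫ G.map (F.map f)))) :=
  aux_w_of_hom adj _ (pullback.snd _ _)

/-- The first projection of the pullback is in the right lifting class of the
morphisms inverted by `F`. -/
lemma aux_fst_rlp (adj : F ⊣ G) {A B : C} (f : A ⟶ B) :
    MorphismPropertyRLP (fun _ _ f => IsIso (F.map f) : MorphismProperty C)
      (pullback.fst (adj.unit.app B) (G.map (F.map f))) := by
  intro X Y w hw
  constructor
  intro u v sq
  haveI : IsIso (F.map w) := hw
  haveI : Subsingleton (Y ⟶ (F ⋙ G).obj B) := aux_sub adj Y (F.obj B)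
  haveI : Subsingleton (X ⟶ (F ⋙ G).obj A) := aux_sub adj X (F.obj A)
  haveI := aux_sub adj Y (F.obj B)
  haveI := aux_sub adj X (F.obj A)
  refine ⟨⟨⟨pullback.lift v
      ((adj.homEquiv Y (F.obj A)) (inv (F.map w) ≫
        (adj.homEquiv X (F.obj A)).symm (u ≫ pullback.snd _ _)))
      (Subsingleton.elim _ _), ?_, ?_⟩⟩⟩
  · apply pullback.hom_ext
    · simp [sq.w]
      exact congrArg (w ≫ ·) (pullback.lift_fst _ _ _)
    · exact Subsingleton.elim _ _
  · exact pullback.lift_fst _ _ _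

end Aux

/-- If `D` is a preorder and `F : C ⥤ D` has a right adjoint `G` with invertible
counit, then `F` inverts the canonical morphism `A ⟶ B ×_{GFB} GFA` for every
`f : A ⟶ B`; consequently, when `C` is finitely bicomplete, there is a model
structure on `C` with weak equivalences the morphisms inverted by `F`, all morphisms
as cofibrations, and fibrations the right lifting class of the weak equivalences. -/
theorem modelStructure_of_adjoint_section_preorder
    {C : Type u₁} [Category.{v₁} C] {D : Type u₂} [Category.{v₂} D]
    [Quiver.IsThin D] [HasFiniteLimits C] [HasFiniteColimits C]
    (F : C ⥤ D) (G : D ⥤ C) (adj : F ⊣ G) [IsIso adj.counit] :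
    (∀ ⦃A B : C⦄ (f : A ⟶ B),
      IsIso (F.map (pullback.lift f (adj.unit.app A)
        (by simp : f ≫ adj.unit.app B = adj.unit.app A ≫ G.map (F.map f))))) ∧
    IsModelStructure (fun _ _ f => IsIso (F.map f) : MorphismProperty C)
      (fun _ _ _ => True)
      (MorphismPropertyRLP (fun _ _ f => IsIso (F.map f) : MorphismProperty C)) := by
  set W : MorphismProperty C := fun _ _ f => IsIso (F.map f) with hW
  -- an element of `Fib ∩ W` lifts against itself, hence is an isomorphism
  have isoOf : ∀ ⦃X Y : C⦄ (g : X ⟶ Y), MorphismPropertyRLP W g → W g → IsIso g := by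
    intro X Y g hrlp hw
    haveI : HasLiftingProperty g g := hrlp g hw
    have sq : CommSq (𝟙 X) g g (𝟙 Y) := ⟨by simp⟩
    exact ⟨sq.lift, sq.fac_left, sq.fac_right⟩
  refine ⟨fun A B f => aux_part1 adj f, ?_⟩
  constructor
  · -- two-out-of-three
    intro X Y Z f g
    refine ⟨fun h1 h2 => ?_, fun h1 h12 => ?_, fun h2 h12 => ?_⟩
    · haveI : IsIso (F.map f) := h1
      haveI : IsIso (F.map g) := h2
      rw [hW]; dsimp only; rw [F.map_comp]; infer_instance
    · haveI : IsIso (F.map f) := h1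
      have h12' : IsIso (F.map f ≫ F.map g) := by
        rw [← F.map_comp]; exact h12
      exact IsIso.of_isIso_comp_left (F.map f) (F.map g)
    · haveI : IsIso (F.map g) := h2
      have h12' : IsIso (F.map f ≫ F.map g) := by
        rw [← F.map_comp]; exact h12
      exact IsIso.of_isIso_comp_right (F.map f) (F.map g)
  · -- WFS (all, Fib ∩ W)
    constructor
    · funext X Y f
      apply propext
      constructor
      · intro _ X' Y' g hg
        haveI : IsIso g := isoOf g hg.1 hg.2
        infer_instance
      · intro _; trivial
    · funext X Y g
      apply propext
      constructor
      · rintro ⟨hfib, hw⟩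
        intro A B f _
        haveI : IsIso g := isoOf g hfib hw
        infer_instance
      · intro h
        haveI : HasLiftingProperty g g := h g trivial
        have sq : CommSq (𝟙 X) g g (𝟙 Y) := ⟨by simp⟩
        haveI : IsIso g := ⟨sq.lift, sq.fac_left, sq.fac_right⟩
        exact ⟨fun A B f hf => inferInstance, inferInstance⟩
    · intro X Y f
      refine ⟨Y, f, 𝟙 Y, trivial, ⟨fun A B f' hf' => inferInstance, ?_⟩, by simp⟩
      rw [hW]; dsimp only; rw [F.map_id]; infer_instance
  · -- WFS (W, Fib)
    constructor
    · funext X Y f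
      apply propext
      constructor
      · rintro ⟨_, hw⟩ A B g hg
        exact hg f hw
      · intro h
        refine ⟨trivial, ?_⟩
        haveI := h _ (aux_fst_rlp adj f)
        have sq : CommSq (pullback.lift f (adj.unit.app X)
            (by simp : f ≫ adj.unit.app Y = adj.unit.app X ≫ G.map (F.map f)))
            f (pullback.fst (adj.unit.app Y) (G.map (F.map f))) (𝟙 Y) :=
          ⟨by simp; exact pullback.lift_fst _ _ _⟩
        exact aux_w_of_hom adj f (sq.lift ≫ pullback.snd _ _)
    · funext X Y g
      apply propext
      constructor
      · intro h A B f hf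
        exact h f hf.2
      · intro h A B f hf
        exact h f ⟨trivial, hf⟩
    · intro X Y f
      exact ⟨pullback (adj.unit.app Y) (G.map (F.map f)),
        pullback.lift f (adj.unit.app X)
          (by simp : f ≫ adj.unit.app Y = adj.unit.app X ≫ G.map (F.map f)),
        pullback.fst _ _, ⟨trivial, aux_part1 adj f⟩, aux_fst_rlp adj f,
        pullback.lift_fst _ _ _⟩
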